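/- Let G be a locally finite infinite graph with at most countably many ends such that δ(G) ≥ k and every end ω of G has some defining sequence C₀ ⊋ C₁ ⊋ … of regions with δ⁺_G(C_n) ≥ k for all n (no connectivity requirement on G - C_n). Then G has a finite nonempty subgraph of minimum degree at least k. -/

import Mathlib

open SimpleGraph Set

universe u
variable {V : Type u}

/-- A graph is locally finite if every vertex has finite neighbourhood. -/
def LocFin (G : SimpleGraph V) : Prop := ∀ v, (G.neighborSet v).Finite

/-- The vertex boundary `V⁺(U)`: vertices of `U` with a neighbour outside `U`. -/
def vBdry (G : SimpleGraph V) (U : Set V) : Set V :=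
  {v | v ∈ U ∧ ∃ w, w ∉ U ∧ G.Adj v w}

/-- The neighbourhood `N(U)` of a vertex set `U`: vertices outside `U` adjacent to `U`. -/
def nbhd (G : SimpleGraph V) (U : Set V) : Set V :=
  {w | w ∉ U ∧ ∃ v ∈ U, G.Adj v w}

/-- Degree of `v` in the subgraph of `G` induced on the vertex set `A`. -/
noncomputable def degIn (G : SimpleGraph V) (A : Set V) (v : V) : ℕ :=
  (A ∩ G.neighborSet v).ncard

/-- `C` is (the vertex set of) a component of `G - S`. -/
def IsCompOf (G : SimpleGraph V) (S C : Set V) : Prop :=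
  C.Nonempty ∧ C ∩ S = ∅ ∧ (G.induce C).Connected ∧
    ∀ v ∈ C, ∀ w, w ∉ S → G.Adj v w → w ∈ C

/-- A region of `G`: a (nonempty) connected induced subgraph with finite vertex boundary. -/
def IsRegion (G : SimpleGraph V) (C : Set V) : Prop :=
  (G.induce C).Connected ∧ (vBdry G C).Finite

/-- `δ⁺_G(C) ≥ k`: every boundary vertex of `C` has degree at least `k`
in the graph `G[S, C]` induced on `N(C) ∪ V⁺(C)`. -/
def minOutDegGE (G : SimpleGraph V) (C : Set V) (k : ℕ) : Prop :=
  ∀ v ∈ vBdry G C, k ≤ degIn G (nbhd G C ∪ vBdry G C) v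

/-- `f : ℕ → V` is a ray (one-way infinite path) in `G`. -/
def IsRay (G : SimpleGraph V) (f : ℕ → V) : Prop :=
  Function.Injective f ∧ ∀ n, G.Adj (f n) (f (n + 1))

/-- The ray `f` has a tail inside the vertex set `C`. -/
def HasTailIn (f : ℕ → V) (C : Set V) : Prop := ∃ N, ∀ n, N ≤ n → f n ∈ C

/-- Two rays are equivalent (belong to the same end) iff no finite vertex set
separates them: for every finite `S` they have tails in a common component of `G - S`. -/
def RayEquiv (G : SimpleGraph V) (f g : ℕ → V) : Prop :=
  ∀ S : Set V, S.Finite → ∃ C, IsCompOf G S C ∧ HasTailIn f C ∧ HasTailIn g C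

section AuxStmt16
def Avoid (G : SimpleGraph V) (D A : Set V) (a b : V) : Prop :=
  ∃ p : G.Walk a b, ∀ y ∈ p.support, y ∈ D ∧ y ∉ A
lemma avoid_refl {G : SimpleGraph V} {D A : Set V} {a : V} (ha : a ∈ D) (ha' : a ∉ A) :
    Avoid G D A a a := ⟨Walk.nil, by simp [ha, ha']⟩
lemma avoid_start {G : SimpleGraph V} {D A : Set V} {a b : V} (h : Avoid G D A a b) :
    a ∈ D ∧ a ∉ A := by obtain ⟨p, hp⟩ := h; exact hp a p.start_mem_support
lemma avoid_end {G : SimpleGraph V} {D A : Set V} {a b : V} (h : Avoid G D A a b) :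
    b ∈ D ∧ b ∉ A := by obtain ⟨p, hp⟩ := h; exact hp b p.end_mem_support
lemma avoid_concat {G : SimpleGraph V} {D A : Set V} {a b c : V} (h : Avoid G D A a b)
    (hadj : G.Adj b c) (hc : c ∈ D) (hc' : c ∉ A) : Avoid G D A a c := by
  obtain ⟨p, hp⟩ := h
  refine ⟨p.concat hadj, ?_⟩
  intro y hy
  rw [Walk.support_concat, List.mem_append] at hy
  rcases hy with hy | hy
  · exact hp y hy
  · simp only [List.mem_singleton] at hy; subst hy; exact ⟨hc, hc'⟩
lemma walk_pred {G : SimpleGraph V} {K : Set V} (P : V → Prop)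
    (hstep : ∀ u w : V, P u → w ∈ K → G.Adj u w → P w) :
    ∀ {a b : ↥K} (_ : (G.induce K).Walk a b), P a.1 → P b.1 := by
  intro a b p
  induction p with
  | nil => exact id
  | cons h q ih => intro ha; exact ih (hstep _ _ ha (by exact Subtype.coe_prop _) h)


/-- From a point of a connected set `K` one reaches every point of `K` (used via `walk_pred`);
here: anything reachable inside the avoid-component is reachable in the induced graph. -/
lemma avoid_reach {G : SimpleGraph V} {D A : Set V} {v : V} :
    ∀ {a b : V} (ha : Avoid G D A v a) (p : G.Walk a b)
      (_ : ∀ y ∈ p.support, y ∈ D ∧ y ∉ A),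
      ∃ hb : Avoid G D A v b,
        (G.induce {w | Avoid G D A v w}).Reachable ⟨a, ha⟩ ⟨b, hb⟩ := by
  intro a b ha p
  induction p with
  | nil => exact fun _ => ⟨ha, Reachable.refl _⟩
  | @cons x y z h q ih =>
    intro hp
    have hy : Avoid G D A v y := by
      refine avoid_concat ha h ?_ ?_
      · exact (hp y (by simp)).1
      · exact (hp y (by simp)).2
    obtain ⟨hb, hr⟩ := ih hy (fun w hw => hp w (by simp [hw]))
    refine ⟨hb, Reachable.trans ?_ hr⟩
    exact Adj.reachable (by exact h)
lemma avoid_isCompOf {G : SimpleGraph V} {S : Set V} {v : V} (hv : v ∉ S) :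
    IsCompOf G S {w | Avoid G univ S v w} := by
  have hvmem : Avoid G univ S v v := avoid_refl (mem_univ v) hv
  refine ⟨⟨v, hvmem⟩, ?_, ?_, ?_⟩
  · ext x
    simp only [mem_inter_iff, mem_setOf_eq, mem_empty_iff_false, iff_false, not_and]
    intro hx
    exact (avoid_end hx).2
  · rw [connected_iff_exists_forall_reachable]
    refine ⟨⟨v, hvmem⟩, ?_⟩
    rintro ⟨b, hb⟩
    obtain ⟨pb, hpb⟩ := hb
    obtain ⟨hb', hrb⟩ := avoid_reach hvmem pb hpb
    exact hrb
  · intro a ha w hw hadj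
    exact avoid_concat ha hadj (mem_univ w) hw

lemma interior_closed {G : SimpleGraph V} {C : Set V} {u w : V} (hu : u ∈ C)
    (hub : u ∉ vBdry G C) (hadj : G.Adj u w) : w ∈ C := by
  by_contra hw
  exact hub ⟨hu, w, hw, hadj⟩

lemma isCompOf_unique {G : SimpleGraph V} {S C₁ C₂ : Set V} (h₁ : IsCompOf G S C₁)
    (h₂ : IsCompOf G S C₂) {x : V} (hx₁ : x ∈ C₁) (hx₂ : x ∈ C₂) : C₁ = C₂ := by
  obtain ⟨-, hS₁, hc₁, hcl₁⟩ := h₁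
  obtain ⟨-, hS₂, hc₂, hcl₂⟩ := h₂
  have key : ∀ (C C' : Set V), C ∩ S = ∅ → (G.induce C).Connected →
      (∀ v ∈ C', ∀ w, w ∉ S → G.Adj v w → w ∈ C') → x ∈ C → x ∈ C' → C ⊆ C' := by
    intro C C' hCS hconn hcl hxC hxC' y hy
    have hr : (G.induce C).Reachable ⟨x, hxC⟩ ⟨y, hy⟩ := hconn.preconnected _ _
    obtain ⟨p⟩ := hr
    refine walk_pred (· ∈ C') (fun u w hu hwK hadj => ?_) p hxC'
    have hwS : w ∉ S := by
      intro hwS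
      have : w ∈ C ∩ S := ⟨hwK, hwS⟩
      simp [hCS] at this
    exact hcl u hu w hwS hadj
  exact le_antisymm (key C₁ C₂ hS₁ hc₁ hcl₂ hx₁ hx₂) (key C₂ C₁ hS₂ hc₂ hcl₁ hx₂ hx₁)

/-- A connected set avoiding the boundary of `C` that meets the interior of `C`
is contained in the interior of `C`. -/
lemma conn_subset_interior {G : SimpleGraph V} {K C : Set V} (hK : (G.induce K).Connected)
    (hdisj : ∀ y ∈ K, y ∉ vBdry G C) {x : V} (hxK : x ∈ K) (hxC : x ∈ C) :
    K ⊆ C \ vBdry G C := by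
  intro y hy
  have hr : (G.induce K).Reachable ⟨x, hxK⟩ ⟨y, hy⟩ := hK.preconnected _ _
  obtain ⟨p⟩ := hr
  exact walk_pred (· ∈ C \ vBdry G C)
    (fun u w hu hwK hadj => ⟨interior_closed hu.1 hu.2 hadj, hdisj w hwK⟩)
    p ⟨hxC, hdisj x hxK⟩

/-- Dichotomy: a connected set avoiding `vBdry G C` is inside `C` or disjoint from `C`. -/
lemma region_dichotomy {G : SimpleGraph V} {K C : Set V} (hK : (G.induce K).Connected)
    (hdisj : ∀ y ∈ K, y ∉ vBdry G C) : K ⊆ C ∨ K ∩ C = ∅ := by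
  by_cases h : ∃ x, x ∈ K ∧ x ∈ C
  · obtain ⟨x, hxK, hxC⟩ := h
    exact Or.inl fun y hy => (conn_subset_interior hK hdisj hxK hxC hy).1
  · push_neg at h
    refine Or.inr ?_
    ext y
    simp only [mem_inter_iff, mem_empty_iff_false, iff_false, not_and]
    exact h y

/-- An injective sequence eventually avoids any finite set. -/
lemma exists_tail_not_mem {f : ℕ → V} (hf : Function.Injective f) {S : Set V}
    (hS : S.Finite) : ∃ N, ∀ n, N ≤ n → f n ∉ S := by
  have hfin : (f ⁻¹' S).Finite := hS.preimage hf.injOn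
  obtain ⟨N, hN⟩ := hfin.bddAbove
  exact ⟨N + 1, fun n hn hmem => by have := hN hmem; omega⟩

lemma rayEquiv_refl {G : SimpleGraph V} {f : ℕ → V} (hf : IsRay G f) : RayEquiv G f f := by
  intro S hS
  obtain ⟨N, hN⟩ := exists_tail_not_mem hf.1 hS
  refine ⟨{w | Avoid G univ S (f N) w}, avoid_isCompOf (hN N le_rfl), ?_, ?_⟩ <;>
  · refine ⟨N, ?_⟩
    intro n hn
    induction n, hn using Nat.le_induction with
    | base => exact avoid_refl (mem_univ _) (hN N le_rfl)
    | succ n hn ih => exact avoid_concat ih (hf.2 n) (mem_univ _) (hN (n+1) (by omega))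

lemma rayEquiv_symm {G : SimpleGraph V} {f g : ℕ → V} (h : RayEquiv G f g) : RayEquiv G g f := by
  intro S hS
  obtain ⟨C, h1, h2, h3⟩ := h S hS
  exact ⟨C, h1, h3, h2⟩

lemma rayEquiv_trans {G : SimpleGraph V} {f g h : ℕ → V} (h₁ : RayEquiv G f g)
    (h₂ : RayEquiv G g h) : RayEquiv G f h := by
  intro S hS
  obtain ⟨C, hC, hfC, hgC⟩ := h₁ S hS
  obtain ⟨C', hC', hgC', hhC'⟩ := h₂ S hS
  obtain ⟨N₁, hN₁⟩ := hgC
  obtain ⟨N₂, hN₂⟩ := hgC'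
  have hCC' : C = C' := isCompOf_unique hC hC' (hN₁ (max N₁ N₂) (le_max_left _ _))
    (hN₂ (max N₁ N₂) (le_max_right _ _))
  exact ⟨C, hC, hfC, hCC' ▸ hhC'⟩

lemma koenig_step {G : SimpleGraph V} (hG : LocFin G) {D A : Set V} {a : V}
    (h : {b | Avoid G D A a b}.Infinite) :
    ∃ a', G.Adj a a' ∧ {b | Avoid G D (insert a A) a' b}.Infinite := by
  classical
  by_contra hcon
  push_neg at hcon
  have hfin : ∀ a' ∈ G.neighborSet a, {b | Avoid G D (insert a A) a' b}.Finite := by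
    intro a' ha'
    exact hcon a' ha'
  have hsub : {b | Avoid G D A a b} ⊆
      insert a (⋃ a' ∈ G.neighborSet a, {b | Avoid G D (insert a A) a' b}) := by
    intro b hb
    rcases eq_or_ne b a with rfl | hne
    · exact mem_insert _ _
    obtain ⟨p, hp⟩ := hb
    have hbys : ∀ y ∈ p.bypass.support, y ∈ D ∧ y ∉ A :=
      fun y hy => hp y (p.support_bypass_subset hy)
    have hpath : p.bypass.IsPath := p.bypass_isPath
    right
    obtain ⟨a'', hadj, q, hq⟩ := Walk.exists_eq_cons_of_ne hne.symm p.bypass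
    rw [hq] at hbys hpath
    rw [Walk.cons_isPath_iff] at hpath
    simp only [mem_iUnion, mem_setOf_eq]
    refine ⟨_, hadj, q, ?_⟩
    intro y hy
    have hmem : y ∈ D ∧ y ∉ A := hbys y (by simp [Walk.support_cons, hy])
    refine ⟨hmem.1, ?_⟩
    intro hins
    rcases mem_insert_iff.mp hins with rfl | hyA
    · exact hpath.2 hy
    · exact hmem.2 hyA
  exact h ((((hG a).biUnion hfin).insert a).subset hsub)

lemma koenig {G : SimpleGraph V} (hG : LocFin G) {D : Set V} {v : V}
    (h : {b | Avoid G D ∅ v b}.Infinite) :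
    ∃ f, IsRay G f ∧ Set.range f ⊆ D := by
  classical
  have step : ∀ s : {x : V × Set V // {b | Avoid G D x.2 x.1 b}.Infinite},
      ∃ t : {x : V × Set V // {b | Avoid G D x.2 x.1 b}.Infinite},
        G.Adj s.1.1 t.1.1 ∧ t.1.2 = insert s.1.1 s.1.2 := by
    rintro ⟨⟨a, A⟩, hs⟩
    obtain ⟨a', hadj, hinf⟩ := koenig_step hG hs
    exact ⟨⟨⟨a', insert a A⟩, hinf⟩, hadj, rfl⟩
  choose nxt hadj hins using step
  let s : ℕ → {x : V × Set V // {b | Avoid G D x.2 x.1 b}.Infinite} :=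
    fun n => Nat.rec ⟨⟨v, ∅⟩, h⟩ (fun _ t => nxt t) n
  have hssucc : ∀ n, s (n + 1) = nxt (s n) := fun n => rfl
  have hadj' : ∀ n, G.Adj (s n).1.1 ((s (n + 1))).1.1 := by
    intro n; rw [hssucc]; exact hadj (s n)
  have hAsucc : ∀ n, (s (n + 1)).1.2 = insert (s n).1.1 (s n).1.2 := by
    intro n; rw [hssucc]; exact hins (s n)
  have hmemD : ∀ n, (s n).1.1 ∈ D ∧ (s n).1.1 ∉ (s n).1.2 := by
    intro n
    obtain ⟨b, hb⟩ := (s n).2.nonempty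
    exact avoid_start hb
  have hmono : ∀ m n, m ≤ n → (s m).1.2 ⊆ (s n).1.2 := by
    intro m n hmn
    induction n, hmn using Nat.le_induction with
    | base => exact Subset.rfl
    | succ n hn ih => rw [hAsucc]; exact ih.trans (subset_insert _ _)
  have hlt : ∀ m n, m < n → (s m).1.1 ∈ (s n).1.2 := by
    intro m n hmn
    have h1 : (s m).1.1 ∈ (s (m + 1)).1.2 := by rw [hAsucc]; exact mem_insert _ _
    exact hmono (m + 1) n hmn h1
  have hinj : Function.Injective (fun n => (s n).1.1) := by
    intro m n hmn
    simp only at hmn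
    by_contra hne
    rcases Nat.lt_or_ge m n with h' | h'
    · exact (hmemD n).2 (hmn ▸ hlt m n h')
    · have h2 : n < m := by omega
      exact (hmemD m).2 (hmn.symm ▸ hlt n m h2)
  refine ⟨fun n => (s n).1.1, ⟨hinj, hadj'⟩, ?_⟩
  rintro x ⟨n, rfl⟩
  exact (hmemD n).1

lemma degIn_mono {G : SimpleGraph V} {A B : Set V} (hAB : A ⊆ B) {v : V}
    (hfin : (G.neighborSet v).Finite) : degIn G A v ≤ degIn G B v :=
  Set.ncard_le_ncard (inter_subset_inter_left _ hAB) (hfin.subset (inter_subset_right))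

/-- The core construction: if every vertex of `D` has at least `k` neighbours in `D`,
`D` is nonempty and contains no ray, then a suitable finite subgraph exists. -/
lemma core {G : SimpleGraph V} (hG : LocFin G) (k : ℕ) (D : Set V) (hne : D.Nonempty)
    (hdegD : ∀ v ∈ D, k ≤ degIn G D v)
    (hnoray : ∀ f, IsRay G f → ¬ Set.range f ⊆ D) :
    ∃ H : G.Subgraph, H.verts.Finite ∧ H.verts.Nonempty ∧
      ∀ w ∈ H.verts, k ≤ (H.neighborSet w).ncard := by
  obtain ⟨v, hv⟩ := hne
  set K := {b | Avoid G D ∅ v b} with hK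
  have hKD : K ⊆ D := fun b hb => (avoid_end hb).1
  have hvK : v ∈ K := avoid_refl hv (notMem_empty v)
  have hKfin : K.Finite := by
    by_contra hInf
    obtain ⟨f, hf, hrange⟩ := koenig hG hInf
    exact hnoray f hf hrange
  have hclose : ∀ u ∈ D, ∀ b ∈ K, G.Adj b u → u ∈ K := by
    intro u hu b hb hadj
    exact avoid_concat hb hadj hu (notMem_empty u)
  refine ⟨⟨K, fun a b => a ∈ K ∧ b ∈ K ∧ G.Adj a b, fun h => h.2.2, fun h => h.1,
    ⟨fun a b h => ⟨h.2.1, h.1, h.2.2.symm⟩⟩⟩, hKfin, ⟨v, hvK⟩, ?_⟩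
  intro w hw
  have hsub : D ∩ G.neighborSet w ⊆ {u | w ∈ K ∧ u ∈ K ∧ G.Adj w u} := by
    rintro u ⟨huD, huN⟩
    exact ⟨hw, hclose u huD w hw huN, huN⟩
  calc k ≤ degIn G D w := hdegD w (hKD hw)
    _ ≤ ({u | w ∈ K ∧ u ∈ K ∧ G.Adj w u}).ncard :=
      Set.ncard_le_ncard hsub ((hG w).subset (fun u hu => hu.2.2))

open Classical in
noncomputable def gStep {α : Type*} [Nonempty α] (P : ℕ → α → Prop) (R : α → α → Prop)
    (j : ℕ) (prev : (i : ℕ) → i < j → α) : α :=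
  if h : ∃ c, P j c ∧ ∀ i (hi : i < j), R c (prev i hi) then h.choose
  else Classical.arbitrary α

noncomputable def gSeq {α : Type*} [Nonempty α] (P : ℕ → α → Prop) (R : α → α → Prop) : ℕ → α
  | j => gStep P R j (fun i _ => gSeq P R i)

lemma gSeq_spec {α : Type*} [Nonempty α] (P : ℕ → α → Prop) (R : α → α → Prop)
    (hstep : ∀ (j : ℕ) (prev : ℕ → α), (∀ i, i < j → P i (prev i)) →
      ∃ c, P j c ∧ ∀ i, i < j → R c (prev i)) :
    ∀ j, P j (gSeq P R j) ∧ ∀ i, i < j → R (gSeq P R j) (gSeq P R i) := by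
  intro j
  induction j using Nat.strong_induction_on with
  | _ j IH =>
    have hex : ∃ c, P j c ∧ ∀ i (hi : i < j), R c (gSeq P R i) := by
      obtain ⟨c, hc1, hc2⟩ := hstep j (fun i => gSeq P R i) (fun i hi => (IH i hi).1)
      exact ⟨c, hc1, fun i hi => hc2 i hi⟩
    have heq : gSeq P R j = gStep P R j (fun i _ => gSeq P R i) := by
      rw [gSeq]
    rw [heq, gStep, dif_pos hex]
    exact ⟨hex.choose_spec.1, fun i hi => hex.choose_spec.2 i hi⟩

lemma escape {G : SimpleGraph V} {C : ℕ → Set V} (hmono : ∀ m n, m ≤ n → C n ⊆ C m)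
    (hint : (⋂ n, C n) = ∅) {T : Set V} (hT : T.Finite) :
    ∃ N, ∀ n, N ≤ n → ∀ x ∈ T, x ∉ C n := by
  refine Set.Finite.induction_on (motive := fun T _ => ∃ N, ∀ n, N ≤ n → ∀ x ∈ T, x ∉ C n) T hT ⟨0, by simp⟩ ?_
  rintro a T' haT' hT'fin ⟨N, hN⟩
  have ha : ∃ m, a ∉ C m := by
    by_contra hcon
    push_neg at hcon
    have : a ∈ ⋂ n, C n := mem_iInter.mpr hcon
    simp [hint] at this
  obtain ⟨m, hm⟩ := ha
  refine ⟨max N m, fun n hn x hx => ?_⟩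
  rcases mem_insert_iff.mp hx with rfl | hx'
  · exact fun hmem => hm (hmono m n (le_trans (le_max_right _ _) hn) hmem)
  · exact hN n (le_trans (le_max_left _ _) hn) x hx'

/-- Two distinct nested sets cannot both be adjacency-closed and connected. -/
lemma bdry_empty_unique {G : SimpleGraph V} {C C' : Set V} (hC : (G.induce C).Connected)
    (hne : C'.Nonempty) (hsub : C' ⊆ C) (hb' : vBdry G C' = ∅) : C ⊆ C' := by
  obtain ⟨x, hx⟩ := hne
  intro y hy
  have hr : (G.induce C).Reachable ⟨x, hsub hx⟩ ⟨y, hy⟩ := hC.preconnected _ _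
  obtain ⟨p⟩ := hr
  refine walk_pred (· ∈ C') (fun u w hu hwC hadj => ?_) p hx
  refine interior_closed hu (fun hmem => ?_) hadj
  rw [hb'] at hmem
  exact hmem

end AuxStmt16

/-- Corollary 5(i): like Theorem 2(i) but with no connectivity requirement on `G - Cₙ`:
if `G` is locally finite, infinite, with at most countably many ends, `δ(G) ≥ k`, and
every end has a defining sequence `C₀ ⊋ C₁ ⊋ …` of regions with `δ⁺_G(Cₙ) ≥ k`, then
`G` has a finite nonempty subgraph of minimum degree at least `k`. -/
theorem stmt16 (G : SimpleGraph V) (hG : LocFin G) (hinf : Infinite V) (k : ℕ)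
    (hcount : Countable (Quot fun p q : {f : ℕ → V // IsRay G f} => RayEquiv G p.1 q.1))
    (hdeg : ∀ v, k ≤ (G.neighborSet v).ncard)
    (hends : ∀ f, IsRay G f → ∃ C : ℕ → Set V,
      (∀ n, IsRegion G (C n)) ∧ (∀ n, C (n + 1) ⊂ C n) ∧ (⋂ n, C n) = ∅ ∧
      (∀ n, ∃ g, IsRay G g ∧ RayEquiv G f g ∧ Set.range g ⊆ C n) ∧
      (∀ n, minOutDegGE G (C n) k)) :
    ∃ H : G.Subgraph, H.verts.Finite ∧ H.verts.Nonempty ∧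
      ∀ w ∈ H.verts, k ≤ (H.neighborSet w).ncard := by
  classical
  haveI := hinf
  by_cases hray : ∃ f, IsRay G f
  swap
  · refine core hG k univ univ_nonempty ?_ ?_
    · intro v _
      simpa [degIn] using hdeg v
    · intro f hf _
      exact hray ⟨f, hf⟩
  obtain ⟨f₀, hf₀⟩ := hray
  haveI : Nonempty (Quot fun p q : {f : ℕ → V // IsRay G f} => RayEquiv G p.1 q.1) :=
    ⟨Quot.mk _ ⟨f₀, hf₀⟩⟩
  obtain ⟨e, he⟩ :=
    exists_surjective_nat (Quot fun p q : {f : ℕ → V // IsRay G f} => RayEquiv G p.1 q.1)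
  have hrep : ∀ j, ∃ p : {f : ℕ → V // IsRay G f},
      Quot.mk (fun p q : {f : ℕ → V // IsRay G f} => RayEquiv G p.1 q.1) p = e j :=
    fun j => Quot.exists_rep (e j)
  choose F hF using hrep
  have hseq := fun j => hends (F j).1 (F j).2
  choose Cs hreg hdec hint hcov hmin using hseq
  have hmono : ∀ j, ∀ m n, m ≤ n → Cs j n ⊆ Cs j m := by
    intro j
    have h : Antitone (Cs j) := antitone_nat_of_succ_le (fun n => (hdec j n).subset)
    exact fun m n hmn => h hmn
  have hbd : ∀ j N, ∃ m, N ≤ m ∧ (vBdry G (Cs j m)).Nonempty := by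
    intro j N
    by_contra hcon
    push_neg at hcon
    have h2 : vBdry G (Cs j (N + 1)) = ∅ := hcon (N + 1) (by omega)
    have hC : (G.induce (Cs j N)).Connected := (hreg j N).1
    have hne : (Cs j (N + 1)).Nonempty := by
      obtain ⟨⟨x, hx⟩⟩ := (hreg j (N + 1)).1.nonempty
      exact ⟨x, hx⟩
    have hsub := bdry_empty_unique hC hne (hdec j N).subset h2
    exact (hdec j N).not_subset hsub
  set P : ℕ → Set V → Prop := fun j c =>
    IsRegion G c ∧ minOutDegGE G c k ∧ (vBdry G c).Nonempty ∧
      ∃ g, IsRay G g ∧ RayEquiv G (F j).1 g ∧ Set.range g ⊆ c with hPdef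
  set R : Set V → Set V → Prop := fun c c' => c ⊆ c' ∨ c ∩ c' = ∅ with hRdef
  have hstep : ∀ (j : ℕ) (prev : ℕ → Set V), (∀ i, i < j → P i (prev i)) →
      ∃ c, P j c ∧ ∀ i, i < j → R c (prev i) := by
    intro j prev hprev
    have hT : (⋃ i ∈ Finset.range j, vBdry G (prev i)).Finite :=
      (Finset.range j).finite_toSet.biUnion
        (fun i hi => (hprev i (Finset.mem_range.mp hi)).1.2)
    obtain ⟨N, hN⟩ := escape (G := G) (hmono j) (hint j) hT
    obtain ⟨m, hm, hbne⟩ := hbd j N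
    refine ⟨Cs j m, ⟨hreg j m, hmin j m, hbne, hcov j m⟩, ?_⟩
    intro i hi
    refine region_dichotomy (hreg j m).1 ?_
    intro y hy hyB
    refine hN m hm y ?_ hy
    simp only [mem_iUnion]
    exact ⟨i, Finset.mem_range.mpr hi, hyB⟩
  set ch : ℕ → Set V := gSeq P R with hchdef
  have hch : ∀ j, P j (ch j) ∧ ∀ i, i < j → (ch j ⊆ ch i ∨ ch j ∩ ch i = ∅) :=
    gSeq_spec P R hstep
  set M : Set ℕ := {i | ∀ i', i' < i → ¬ ch i ⊆ ch i'} with hMdef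
  set D : Set V := {v | ∀ i ∈ M, v ∉ ch i \ vBdry G (ch i)} with hDdef
  have claim1 : ∀ i ∈ M, ∀ i' ∈ M, i ≠ i' → ch i ∩ ch i' = ∅ := by
    have key : ∀ i i', i' < i → i ∈ M → ch i ∩ ch i' = ∅ := by
      intro i i' hlt hiM
      rcases (hch i).2 i' hlt with hsub | hdisj
      · exact absurd hsub (hiM i' hlt)
      · exact hdisj
    intro i hiM i' hi'M hne
    rcases Nat.lt_or_ge i' i with h | h
    · exact key i i' h hiM
    · have h2 : i < i' := by omega
      rw [Set.inter_comm]
      exact key i' i h2 hi'M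
  have claim2 : ∀ j, ∃ m ∈ M, ch j ⊆ ch m := by
    intro j
    induction j using Nat.strong_induction_on with
    | _ j IH =>
      by_cases hj : j ∈ M
      · exact ⟨j, hj, Subset.rfl⟩
      · simp only [hMdef, mem_setOf_eq] at hj
        push_neg at hj
        obtain ⟨i', hi', hsub⟩ := hj
        obtain ⟨m, hmM, hsub'⟩ := IH i' hi'
        exact ⟨m, hmM, hsub.trans hsub'⟩
  have hbdD : ∀ i ∈ M, vBdry G (ch i) ⊆ D := by
    intro i hiM w hw
    intro i' hi'M hmem
    rcases eq_or_ne i' i with rfl | hne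
    · exact hmem.2 hw
    · exact (eq_empty_iff_forall_notMem.mp (claim1 i hiM i' hi'M hne.symm) w) ⟨hw.1, hmem.1⟩
  have hnbD : ∀ i ∈ M, nbhd G (ch i) ⊆ D := by
    intro i hiM w hw
    obtain ⟨hwn, u, huC, hadj⟩ := hw
    intro i' hi'M hmem
    have huC' : u ∈ ch i' := interior_closed hmem.1 hmem.2 hadj.symm
    rcases eq_or_ne i' i with rfl | hne
    · exact hwn hmem.1
    · exact (eq_empty_iff_forall_notMem.mp (claim1 i hiM i' hi'M hne.symm) u) ⟨huC, huC'⟩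
  have h0M : (0 : ℕ) ∈ M := fun i' hi' => absurd hi' (Nat.not_lt_zero i')
  have hDne : D.Nonempty := by
    obtain ⟨x, hx⟩ := (hch 0).1.2.2.1
    exact ⟨x, hbdD 0 h0M hx⟩
  have hdegD : ∀ v ∈ D, k ≤ degIn G D v := by
    intro v hv
    by_cases hb : ∃ i ∈ M, v ∈ vBdry G (ch i)
    · obtain ⟨i, hiM, hvb⟩ := hb
      have h1 : nbhd G (ch i) ∪ vBdry G (ch i) ⊆ D :=
        union_subset (hnbD i hiM) (hbdD i hiM)
      calc k ≤ degIn G (nbhd G (ch i) ∪ vBdry G (ch i)) v := (hch i).1.2.1 v hvb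
        _ ≤ degIn G D v := degIn_mono h1 (hG v)
    · push_neg at hb
      have hnb : G.neighborSet v ⊆ D := by
        intro u hu
        intro i' hi'M hmem
        have hadj : G.Adj v u := hu
        have hvC : v ∈ ch i' := interior_closed hmem.1 hmem.2 hadj.symm
        have hvb : v ∈ vBdry G (ch i') := by
          by_contra hnb'
          exact hv i' hi'M ⟨hvC, hnb'⟩
        exact hb i' hi'M hvb
      show k ≤ (D ∩ G.neighborSet v).ncard
      rw [inter_eq_self_of_subset_right hnb]
      exact hdeg v
  have hnoray : ∀ f, IsRay G f → ¬ Set.range f ⊆ D := by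
    intro f hf hsub
    obtain ⟨j, hj⟩ := he (Quot.mk _ ⟨f, hf⟩)
    have hquot : Quot.mk (fun p q : {f : ℕ → V // IsRay G f} => RayEquiv G p.1 q.1) (F j) =
        Quot.mk _ ⟨f, hf⟩ := (hF j).trans hj
    have hequiv : Equivalence (fun p q : {f : ℕ → V // IsRay G f} => RayEquiv G p.1 q.1) :=
      ⟨fun p => rayEquiv_refl p.2, fun h => rayEquiv_symm h, fun h1 h2 => rayEquiv_trans h1 h2⟩
    have hFf : RayEquiv G (F j).1 f := hequiv.eqvGen_iff.mp (Quot.eq.mp hquot)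
    obtain ⟨g, hg, hFg, hgsub⟩ := (hch j).1.2.2.2
    have hfg : RayEquiv G f g := rayEquiv_trans (rayEquiv_symm hFf) hFg
    obtain ⟨m, hmM, hsubm⟩ := claim2 j
    have hSfin : (vBdry G (ch j)).Finite := (hch j).1.1.2
    obtain ⟨K, hK, hfK, hgK⟩ := hfg (vBdry G (ch j)) hSfin
    obtain ⟨N₁, hN₁⟩ := hgK
    have hx : g N₁ ∈ K := hN₁ N₁ le_rfl
    have hxC : g N₁ ∈ ch j := hgsub (mem_range_self N₁)
    have hKdisj : ∀ y ∈ K, y ∉ vBdry G (ch j) := by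
      intro y hy hyB
      exact (eq_empty_iff_forall_notMem.mp hK.2.1 y) ⟨hy, hyB⟩
    have hKsub : K ⊆ ch j \ vBdry G (ch j) := conn_subset_interior hK.2.2.1 hKdisj hx hxC
    obtain ⟨N₃, hN₃⟩ := hfK
    have hfin : (vBdry G (ch m)).Finite := (hch m).1.1.2
    have hmem : ∀ n : ℕ, f (N₃ + n) ∈ vBdry G (ch m) := by
      intro n
      have hfK' : f (N₃ + n) ∈ K := hN₃ _ (by omega)
      have hfC : f (N₃ + n) ∈ ch m := hsubm (hKsub hfK').1
      have hfD : f (N₃ + n) ∈ D := hsub (mem_range_self _)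
      by_contra hnb
      exact hfD m hmM ⟨hfC, hnb⟩
    have hinj2 : Function.Injective (fun n : ℕ => f (N₃ + n)) :=
      hf.1.comp (fun a b h => by omega)
    exact (Set.infinite_of_injective_forall_mem hinj2 hmem) hfin
  exact core hG k D hDne hdegD hnoray
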